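/- Let U ∈ ℝ^{n×m} satisfy UᵀU = I_m. Let m ≥ 1, let s̃_{k−m}, …, s̃_k and ỹ_k be vectors in ℝⁿ with each of s̃_{k−m}, …, s̃_k lying in the column space of U, let S̃_k = [s̃_{k−m}, …, s̃_{k−1}] and S̃_{k+1} = [s̃_{k+1−m}, …, s̃_k], let L ∈ ℝ^{m×m}, and let t ∈ ℝᵐ satisfy S̃_{k+1} t = s̃_{k−m}. Set H̃ = S̃_k L S̃_kᵀ and H̃⁺ = S̃_{k+1} (T(t) L T(t)ᵀ + E_m) S̃_{k+1}ᵀ. Then the BFGS update of Uᵀ H̃ U by the pair (Uᵀ s̃_k, Uᵀ ỹ_k) equals Uᵀ H̃⁺ U. -/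

import Mathlib

open Matrix

/-- The BFGS update of `H` by the pair `(s, y)`:
`(I - s yᵀ) H (I - y sᵀ) + s sᵀ`. -/
def bfgsUpdate {ι : Type*} [Fintype ι] [DecidableEq ι]
    (H : Matrix ι ι ℝ) (s y : ι → ℝ) : Matrix ι ι ℝ :=
  (1 - Matrix.vecMulVec s y) * H * (1 - Matrix.vecMulVec y s) + Matrix.vecMulVec s s

/-- The `m × m` matrix whose last diagonal entry is `1` and all other entries are `0`. -/
def Emat (m : ℕ) : Matrix (Fin m) (Fin m) ℝ :=
  Matrix.of fun i j => if (i : ℕ) = m - 1 ∧ (j : ℕ) = m - 1 then 1 else 0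

/-- `S̃_k = [s̃_{k-m}, …, s̃_{k-1}]`: here `s i` denotes `s̃_{k-m+i}` for `i : Fin (m+1)`,
and this matrix has columns `s 0, …, s (m-1)`. -/
def Stil0 {n m : ℕ} (s : Fin (m + 1) → Fin n → ℝ) : Matrix (Fin n) (Fin m) ℝ :=
  Matrix.of fun i j => s j.castSucc i

/-- `S̃_{k+1} = [s̃_{k+1-m}, …, s̃_k]`: with `s i` denoting `s̃_{k-m+i}`, this matrix has
columns `s 1, …, s m`. -/
def Stil1 {n m : ℕ} (s : Fin (m + 1) → Fin n → ℝ) : Matrix (Fin n) (Fin m) ℝ :=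
  Matrix.of fun i j => s j.succ i

/-- The `m × m` matrix `T(t)` (0-indexed): column `0` has entries `t i` for `i < m-1` and
`t (m-1) - ỹᵀ s̃_{k-m}` in row `m-1`; column `j ≥ 1` has a `1` in row `j-1` and
`-ỹᵀ s̃_{k-m+j}` in row `m-1`; all other entries are `0`. -/
def Tmat {n m : ℕ} (s : Fin (m + 1) → Fin n → ℝ) (y : Fin n → ℝ) (t : Fin m → ℝ) :
    Matrix (Fin m) (Fin m) ℝ :=
  Matrix.of fun i j =>
    if (j : ℕ) = 0 then
      (if (i : ℕ) = m - 1 then t i - y ⬝ᵥ s 0 else t i)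
    else if (i : ℕ) + 1 = (j : ℕ) then 1
    else if (i : ℕ) = m - 1 then -(y ⬝ᵥ s j.castSucc)
    else 0

-- hC
lemma aux_hC {n m : ℕ} (hm : 1 ≤ m) (U : Matrix (Fin n) (Fin m) ℝ)
    (s : Fin (m + 1) → Fin n → ℝ) :
    (Uᵀ * Stil1 s) * Emat m * (Uᵀ * Stil1 s)ᵀ
      = vecMulVec (Uᵀ.mulVec (s (Fin.last m))) (Uᵀ.mulVec (s (Fin.last m))) := by
  have hlm : m - 1 < m := by omega
  have hEm : ∀ k l : Fin m, Emat m k l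
      = (if k = (⟨m - 1, hlm⟩ : Fin m) then (1:ℝ) else 0)
        * (if l = (⟨m - 1, hlm⟩ : Fin m) then (1:ℝ) else 0) := by
    intro k l
    simp only [Emat, of_apply, Fin.ext_iff]
    split_ifs <;> simp_all
  have hsucc : (⟨m - 1, hlm⟩ : Fin m).succ = Fin.last m := by
    apply Fin.ext; simp; omega
  ext i j
  simp only [mul_apply, transpose_apply, hEm, mul_ite, mul_one, mul_zero, ite_mul, zero_mul,
    Finset.sum_ite_eq', Finset.mem_univ, if_true, vecMulVec_apply]
  simp [Stil1, mulVec, dotProduct, hsucc, mul_comm]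

lemma aux_hD {n m : ℕ} (hm : 1 ≤ m) (U : Matrix (Fin n) (Fin m) ℝ) (hU : Uᵀ * U = 1)
    (s : Fin (m + 1) → Fin n → ℝ) (y : Fin n → ℝ)
    (hs : ∀ i : Fin (m + 1), s i ∈ Submodule.span ℝ (Set.range Uᵀ))
    (t : Fin m → ℝ) (ht : (Stil1 s).mulVec t = s 0) :
    (1 - vecMulVec (Uᵀ.mulVec (s (Fin.last m))) (Uᵀ.mulVec y)) * (Uᵀ * Stil0 s)
      = (Uᵀ * Stil1 s) * Tmat s y t := by
  have hlm : m - 1 < m := by omega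
  -- projection dot product fact
  have hdot : ∀ i : Fin (m + 1), (Uᵀ.mulVec y) ⬝ᵥ (Uᵀ.mulVec (s i)) = y ⬝ᵥ s i := by
    intro i
    obtain ⟨c, hc⟩ : ∃ c, U.mulVec c = s i := by
      obtain ⟨c, hc⟩ := (Submodule.mem_span_range_iff_exists_fun ℝ).mp (hs i)
      refine ⟨c, ?_⟩
      funext j
      rw [← hc]
      simp [Matrix.mulVec, dotProduct, mul_comm]
    rw [← hc, mulVec_mulVec, hU, one_mulVec, dotProduct_mulVec, mulVec_transpose]
  -- entries of U^T * Stil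
  have hS0 : ∀ (i : Fin m) (j : Fin m), (Uᵀ * Stil0 s) i j = Uᵀ.mulVec (s j.castSucc) i := by
    intro i j; simp [mul_apply, Stil0, mulVec, dotProduct]
  have hS1 : ∀ (i : Fin m) (j : Fin m), (Uᵀ * Stil1 s) i j = Uᵀ.mulVec (s j.succ) i := by
    intro i j; simp [mul_apply, Stil1, mulVec, dotProduct]
  ext i j
  -- LHS entry
  have hL : (((1 - vecMulVec (Uᵀ.mulVec (s (Fin.last m))) (Uᵀ.mulVec y)) * (Uᵀ * Stil0 s) : Matrix (Fin m) (Fin m) ℝ)) i j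
      = Uᵀ.mulVec (s j.castSucc) i
        - Uᵀ.mulVec (s (Fin.last m)) i * (y ⬝ᵥ s j.castSucc) := by
    rw [sub_mul, Matrix.one_mul, Matrix.sub_apply, hS0, mul_apply]
    congr 1
    have : ∀ k : Fin m, vecMulVec (Uᵀ.mulVec (s (Fin.last m))) (Uᵀ.mulVec y) i k
          * (Uᵀ * Stil0 s) k j
        = Uᵀ.mulVec (s (Fin.last m)) i * (Uᵀ.mulVec y k * Uᵀ.mulVec (s j.castSucc) k) := by
      intro k; rw [vecMulVec_apply, hS0, mul_assoc]
    rw [Finset.sum_congr rfl (fun k _ => this k), ← Finset.mul_sum, ← hdot j.castSucc]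
    rfl
  rw [hL, mul_apply]
  symm
  by_cases hj : (j : ℕ) = 0
  · -- column 0
    have hT0 : ∀ k : Fin m, Tmat s y t k j
        = t k + (if k = (⟨m - 1, hlm⟩ : Fin m) then -(y ⬝ᵥ s 0) else 0) := by
      intro k
      simp only [Tmat, of_apply, hj, if_pos rfl, Fin.ext_iff]
      split_ifs <;> simp_all <;> ring
    have hjc : j.castSucc = 0 := by apply Fin.ext; simpa using hj
    have hsum : (∑ k, (Uᵀ * Stil1 s) i k * t k) = Uᵀ.mulVec (s 0) i := by
      have h := congrArg (fun v => Uᵀ.mulVec v i) ht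
      simp only [mulVec_mulVec] at h
      rw [← h]
      simp [mulVec_mulVec, mul_apply, Matrix.mulVec, dotProduct]
    have hls : (⟨m - 1, hlm⟩ : Fin m).succ = Fin.last m := by
      apply Fin.ext; simp; omega
    calc (∑ k, (Uᵀ * Stil1 s) i k * Tmat s y t k j)
        = ∑ k, ((Uᵀ * Stil1 s) i k * t k
            + (Uᵀ * Stil1 s) i k * (if k = (⟨m - 1, hlm⟩ : Fin m) then -(y ⬝ᵥ s 0) else 0)) := by
          refine Finset.sum_congr rfl fun k _ => ?_
          rw [hT0, mul_add]
      _ = Uᵀ.mulVec (s 0) i + Uᵀ.mulVec (s (Fin.last m)) i * -(y ⬝ᵥ s 0) := by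
          rw [Finset.sum_add_distrib, hsum]
          congr 1
          simp [mul_ite, Finset.sum_ite_eq', hS1, hls]
      _ = Uᵀ.mulVec (s j.castSucc) i
          - Uᵀ.mulVec (s (Fin.last m)) i * (y ⬝ᵥ s j.castSucc) := by
          rw [hjc]; ring
  · -- column j ≥ 1
    have hjlt : (j : ℕ) < m := j.isLt
    have hjp : (j : ℕ) - 1 < m := by omega
    have hT1 : ∀ k : Fin m, Tmat s y t k j
        = (if k = (⟨(j : ℕ) - 1, hjp⟩ : Fin m) then 1 else 0)
          + (if k = (⟨m - 1, hlm⟩ : Fin m) then -(y ⬝ᵥ s j.castSucc) else 0) := by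
      intro k
      simp only [Tmat, of_apply, if_neg hj, Fin.ext_iff]
      split_ifs <;> simp_all <;> omega
    have hjps : (⟨(j : ℕ) - 1, hjp⟩ : Fin m).succ = j.castSucc := by
      apply Fin.ext; simp; omega
    have hls : (⟨m - 1, hlm⟩ : Fin m).succ = Fin.last m := by
      apply Fin.ext; simp; omega
    calc (∑ k, (Uᵀ * Stil1 s) i k * Tmat s y t k j)
        = ∑ k, ((Uᵀ * Stil1 s) i k * (if k = (⟨(j : ℕ) - 1, hjp⟩ : Fin m) then 1 else 0)
            + (Uᵀ * Stil1 s) i k * (if k = (⟨m - 1, hlm⟩ : Fin m) then -(y ⬝ᵥ s j.castSucc) else 0)) := by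
          refine Finset.sum_congr rfl fun k _ => ?_
          rw [hT1, mul_add]
      _ = Uᵀ.mulVec (s j.castSucc) i
          - Uᵀ.mulVec (s (Fin.last m)) i * (y ⬝ᵥ s j.castSucc) := by
          rw [Finset.sum_add_distrib]
          simp [mul_ite, Finset.sum_ite_eq', hS1, hls, hjps]
          ring

/-- With `U` having orthonormal columns, all of `s̃_{k-m}, …, s̃_k` in the column space of
`U`, and `S̃_{k+1} t = s̃_{k-m}`: the BFGS update of `Uᵀ H̃ U` by `(Uᵀ s̃_k, Uᵀ ỹ_k)` equals
`Uᵀ H̃⁺ U`, where `H̃ = S̃_k L S̃_kᵀ` and `H̃⁺ = S̃_{k+1} (T(t) L T(t)ᵀ + E_m) S̃_{k+1}ᵀ`. -/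
theorem stmt_14 (n m : ℕ) (hm : 1 ≤ m) (U : Matrix (Fin n) (Fin m) ℝ) (hU : Uᵀ * U = 1)
    (s : Fin (m + 1) → Fin n → ℝ) (y : Fin n → ℝ)
    (hs : ∀ i : Fin (m + 1), s i ∈ Submodule.span ℝ (Set.range Uᵀ))
    (L : Matrix (Fin m) (Fin m) ℝ) (t : Fin m → ℝ)
    (ht : (Stil1 s).mulVec t = s 0) :
    bfgsUpdate (Uᵀ * (Stil0 s * L * (Stil0 s)ᵀ) * U) (Uᵀ.mulVec (s (Fin.last m)))
        (Uᵀ.mulVec y) =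
      Uᵀ * (Stil1 s * (Tmat s y t * L * (Tmat s y t)ᵀ + Emat m) * (Stil1 s)ᵀ) * U := by
  have hD := aux_hD hm U hU s y hs t ht
  have hC := aux_hC hm U s
  have h1 : Uᵀ * (Stil0 s * L * (Stil0 s)ᵀ) * U
      = (Uᵀ * Stil0 s) * L * (Uᵀ * Stil0 s)ᵀ := by
    simp only [transpose_mul, transpose_transpose, Matrix.mul_assoc]
  have h2 : Uᵀ * (Stil1 s * (Tmat s y t * L * (Tmat s y t)ᵀ + Emat m) * (Stil1 s)ᵀ) * U
      = (Uᵀ * Stil1 s) * (Tmat s y t * L * (Tmat s y t)ᵀ + Emat m) * (Uᵀ * Stil1 s)ᵀ := by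
    simp only [transpose_mul, transpose_transpose, Matrix.mul_assoc]
  rw [h1, h2, bfgsUpdate]
  have htr : (1 - vecMulVec (Uᵀ.mulVec y) (Uᵀ.mulVec (s (Fin.last m))))
      = (1 - vecMulVec (Uᵀ.mulVec (s (Fin.last m))) (Uᵀ.mulVec y))ᵀ := by
    ext i j
    simp [transpose_apply, vecMulVec_apply, Matrix.one_apply, mul_comm, eq_comm,
      Matrix.sub_apply]
  rw [htr]
  have key : (1 - vecMulVec (Uᵀ.mulVec (s (Fin.last m))) (Uᵀ.mulVec y))
        * ((Uᵀ * Stil0 s) * L * (Uᵀ * Stil0 s)ᵀ)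
        * (1 - vecMulVec (Uᵀ.mulVec (s (Fin.last m))) (Uᵀ.mulVec y))ᵀ
      = (Uᵀ * Stil1 s) * (Tmat s y t * L * (Tmat s y t)ᵀ) * (Uᵀ * Stil1 s)ᵀ := by
    calc (1 - vecMulVec (Uᵀ.mulVec (s (Fin.last m))) (Uᵀ.mulVec y))
          * ((Uᵀ * Stil0 s) * L * (Uᵀ * Stil0 s)ᵀ)
          * (1 - vecMulVec (Uᵀ.mulVec (s (Fin.last m))) (Uᵀ.mulVec y))ᵀ
        = ((1 - vecMulVec (Uᵀ.mulVec (s (Fin.last m))) (Uᵀ.mulVec y)) * (Uᵀ * Stil0 s))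
            * L
            * ((1 - vecMulVec (Uᵀ.mulVec (s (Fin.last m))) (Uᵀ.mulVec y))
                * (Uᵀ * Stil0 s))ᵀ := by
          simp only [transpose_mul, transpose_transpose, Matrix.mul_assoc]
      _ = ((Uᵀ * Stil1 s) * Tmat s y t) * L * ((Uᵀ * Stil1 s) * Tmat s y t)ᵀ := by
          rw [hD]
      _ = (Uᵀ * Stil1 s) * (Tmat s y t * L * (Tmat s y t)ᵀ) * (Uᵀ * Stil1 s)ᵀ := by
          simp only [transpose_mul, transpose_transpose, Matrix.mul_assoc]
  rw [key, ← hC, Matrix.mul_add, Matrix.add_mul]
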